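/- Let f_n(x) = (1 - α_n log x)^{-1} for x ∈ (0,1], where α_n → 0 with α_n > 0. Then ∫_0^1 f_n(x) dx = 1 - α_n + O(α_n²) as n → ∞. -/

import Mathlib

open MeasureTheory Filter

open Real Set

lemma image_exp_neg : (fun u : ℝ => Real.exp (-u)) '' (Ioi 0) = Ioo 0 1 := by
  ext x
  constructor
  · rintro ⟨u, hu, rfl⟩
    exact ⟨Real.exp_pos _, by have := mem_Ioi.mp hu; calc Real.exp (-u) < Real.exp 0 := Real.exp_lt_exp.mpr (by linarith)
      _ = 1 := Real.exp_zero⟩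
  · rintro ⟨hx0, hx1⟩
    exact ⟨-Real.log x, by simpa using Real.log_neg hx0 hx1, by simp [Real.exp_log hx0]⟩

lemma log_pow_key (g : ℝ → ℝ) :
    (IntegrableOn (fun x => g (Real.log x)) (Ioo 0 1) ↔
      IntegrableOn (fun u => Real.exp (-u) * g (-u)) (Ioi 0)) ∧
    (∫ x in Ioo (0:ℝ) 1, g (Real.log x)) = ∫ u in Ioi (0:ℝ), Real.exp (-u) * g (-u) := by
  have hderiv : ∀ u ∈ Ioi (0:ℝ), HasDerivWithinAt (fun u : ℝ => Real.exp (-u))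
      (-Real.exp (-u)) (Ioi 0) u := by
    intro u _
    simpa [Function.comp_def] using ((Real.hasDerivAt_exp (-u)).comp u ((hasDerivAt_id u).neg)).hasDerivWithinAt
  have hinj : InjOn (fun u : ℝ => Real.exp (-u)) (Ioi 0) := by
    intro a _ b _ h
    simpa using Real.exp_injective h
  constructor
  · rw [← image_exp_neg,
      integrableOn_image_iff_integrableOn_abs_deriv_smul measurableSet_Ioi hderiv hinj]
    simp [abs_of_nonneg (Real.exp_nonneg _), smul_eq_mul, Real.log_exp]
  · rw [← image_exp_neg,
      integral_image_eq_integral_abs_deriv_smul measurableSet_Ioi hderiv hinj]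
    simp [abs_of_nonneg (Real.exp_nonneg _), smul_eq_mul, Real.log_exp]

lemma gamma_k (k : ℕ) :
    IntegrableOn (fun u : ℝ => Real.exp (-u) * u ^ k) (Ioi 0) ∧
    (∫ u in Ioi (0:ℝ), Real.exp (-u) * u ^ k) = k.factorial := by
  have hk : (0:ℝ) < (k:ℝ) + 1 := by positivity
  have hcong : ∀ u ∈ Ioi (0:ℝ),
      Real.exp (-u) * u ^ (((k:ℝ)+1) - 1) = Real.exp (-u) * u ^ k := by
    intro u _
    rw [add_sub_cancel_right, Real.rpow_natCast]
  constructor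
  · exact (Real.GammaIntegral_convergent hk).congr_fun
      (fun u hu => hcong u hu) measurableSet_Ioi
  · rw [setIntegral_congr_fun measurableSet_Ioi (fun u hu => (hcong u hu).symm),
      ← Real.Gamma_eq_integral hk]
    exact_mod_cast Real.Gamma_nat_eq_factorial k

lemma log_pow_int (k : ℕ) :
    IntegrableOn (fun x => (Real.log x) ^ k) (Ioo (0:ℝ) 1) ∧
    (∫ x in Ioo (0:ℝ) 1, (Real.log x) ^ k) = (-1) ^ k * k.factorial := by
  have h := log_pow_key (fun t => t ^ k)
  have he : ∀ u : ℝ, Real.exp (-u) * (-u) ^ k = (-1:ℝ)^k * (Real.exp (-u) * u ^ k) := by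
    intro u; rw [neg_pow]; ring
  constructor
  · rw [h.1]
    refine Integrable.congr (((gamma_k k).1).const_mul ((-1:ℝ)^k)) ?_
    filter_upwards with u using (he u).symm
  · rw [h.2]
    calc (∫ u in Ioi (0:ℝ), Real.exp (-u) * (-u) ^ k)
        = ∫ u in Ioi (0:ℝ), (-1:ℝ)^k * (Real.exp (-u) * u ^ k) := by
          exact integral_congr_ae (by filter_upwards with u using he u)
      _ = (-1:ℝ)^k * k.factorial := by rw [integral_const_mul, (gamma_k k).2]

/-- If `α_n > 0` and `α_n → 0`, then `∫_0^1 (1 - α_n log x)^{-1} dx = 1 - α_n + O(α_n²)`. -/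
theorem stmt_3 (α : ℕ → ℝ) (hαpos : ∀ n, 0 < α n)
    (hα : Tendsto α atTop (nhds 0)) :
    ∃ C : ℝ, ∀ᶠ n in atTop,
      |(∫ x in Set.Ioc (0 : ℝ) 1, (1 - α n * Real.log x)⁻¹) - (1 - α n)| ≤ C * (α n) ^ 2 := by
  refine ⟨2, Eventually.of_forall fun n => ?_⟩
  set a := α n with ha
  have ha0 : 0 < a := hαpos n
  -- basic facts on Ioo 0 1
  have hIoo : MeasurableSet (Ioo (0:ℝ) 1) := measurableSet_Ioo
  have hvol : volume (Ioo (0:ℝ) 1) = 1 := by simp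
  have hbound : ∀ x ∈ Ioo (0:ℝ) 1, (1:ℝ) ≤ 1 - a * Real.log x := by
    intro x hx
    nlinarith [Real.log_neg hx.1 hx.2]
  -- integrability of f
  have hfmeas : Measurable fun x : ℝ => (1 - a * Real.log x)⁻¹ :=
    (measurable_const.sub (measurable_const.mul Real.measurable_log)).inv
  have hfint : IntegrableOn (fun x : ℝ => (1 - a * Real.log x)⁻¹) (Ioo 0 1) := by
    refine Integrable.mono' (g := fun _ => (1:ℝ))
      (integrableOn_const_iff (C := (1:ℝ)).mpr (Or.inr (by rw [hvol]; exact ENNReal.one_lt_top)))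
      hfmeas.aestronglyMeasurable ?_
    filter_upwards [ae_restrict_mem hIoo] with x hx
    have h1 := hbound x hx
    rw [Real.norm_eq_abs, abs_of_nonneg (by positivity)]
    exact inv_le_one_of_one_le₀ h1
  -- integrability of log and log^2
  have hlogint : IntegrableOn Real.log (Ioo (0:ℝ) 1) := by
    have := (log_pow_int 1).1
    simpa using this
  have hlog2int : IntegrableOn (fun x => (Real.log x) ^ 2) (Ioo (0:ℝ) 1) := (log_pow_int 2).1
  have hhint : IntegrableOn (fun x => 1 + a * Real.log x) (Ioo (0:ℝ) 1) :=
    (integrableOn_const_iff (C := (1:ℝ)).mpr (Or.inr (by rw [hvol]; exact ENNReal.one_lt_top))).add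
      (hlogint.const_mul a)
  -- integrals of log, log^2
  have hlogval : (∫ x in Ioo (0:ℝ) 1, Real.log x) = -1 := by
    have := (log_pow_int 1).2
    simpa using this
  have hlog2val : (∫ x in Ioo (0:ℝ) 1, (Real.log x) ^ 2) = 2 := by
    have := (log_pow_int 2).2
    norm_num at this
    simpa using this
  have hhval : (∫ x in Ioo (0:ℝ) 1, (1 + a * Real.log x)) = 1 - a := by
    rw [integral_add (integrableOn_const_iff (C := (1:ℝ)).mpr (Or.inr (by rw [hvol]; exact ENNReal.one_lt_top)))
      (hlogint.const_mul a), integral_const, integral_const_mul, hlogval,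
      measureReal_def, Measure.restrict_apply_univ, hvol]
    simp
    ring
  -- pointwise bounds on the difference
  have hdiff : ∀ x ∈ Ioo (0:ℝ) 1,
      (1 - a * Real.log x)⁻¹ - (1 + a * Real.log x) = (a * Real.log x)^2 / (1 - a * Real.log x) := by
    intro x hx
    have h1 := hbound x hx
    have hne : (1 - a * Real.log x) ≠ 0 := by linarith
    field_simp
    ring
  have hd0 : ∀ x ∈ Ioo (0:ℝ) 1,
      0 ≤ (1 - a * Real.log x)⁻¹ - (1 + a * Real.log x) := by
    intro x hx
    rw [hdiff x hx]
    have h1 := hbound x hx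
    positivity
  have hd2 : ∀ x ∈ Ioo (0:ℝ) 1,
      (1 - a * Real.log x)⁻¹ - (1 + a * Real.log x) ≤ a ^ 2 * (Real.log x) ^ 2 := by
    intro x hx
    rw [hdiff x hx]
    have h1 := hbound x hx
    have : (a * Real.log x) ^ 2 / (1 - a * Real.log x) ≤ (a * Real.log x) ^ 2 / 1 :=
      div_le_div_of_nonneg_left (by positivity) one_pos h1
    calc (a * Real.log x) ^ 2 / (1 - a * Real.log x) ≤ (a * Real.log x)^2 / 1 := this
      _ = a ^ 2 * (Real.log x) ^ 2 := by ring
  -- assemble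
  rw [integral_Ioc_eq_integral_Ioo, ← hhval, ← integral_sub hfint hhint]
  rw [abs_of_nonneg (setIntegral_nonneg hIoo hd0)]
  calc (∫ x in Ioo (0:ℝ) 1, ((1 - a * Real.log x)⁻¹ - (1 + a * Real.log x)))
      ≤ ∫ x in Ioo (0:ℝ) 1, a ^ 2 * (Real.log x) ^ 2 :=
        setIntegral_mono_on (hfint.sub hhint) (hlog2int.const_mul _) hIoo hd2
    _ = a ^ 2 * 2 := by rw [integral_const_mul, hlog2val]
    _ = 2 * a ^ 2 := by ring
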